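/- Each element of U_k = {((1^a, 0^b), (1^c, 0^d)) : a + b = c + d = k, a ≥ c, a ≥ 1} is irreducible in A_k: it cannot be written as a sum of two nonzero elements of A_k. -/

import Mathlib

/-- `(l, m)` is a 2-row plane partition with `k` columns. -/
def InA (k : ℕ) (p : (Fin k → ℕ) × (Fin k → ℕ)) : Prop :=
  (∀ i j : Fin k, i ≤ j → p.1 j ≤ p.1 i) ∧
  (∀ i j : Fin k, i ≤ j → p.2 j ≤ p.2 i) ∧
  (∀ i, p.2 i ≤ p.1 i)

/-- The vector consisting of `a` ones followed by `k - a` zeros. -/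
def onesZeros (k a : ℕ) : Fin k → ℕ :=
  fun i => if (i : ℕ) < a then 1 else 0

/-- The set `U_k`. -/
def Uset (k : ℕ) : Set ((Fin k → ℕ) × (Fin k → ℕ)) :=
  {p | ∃ a c : ℕ, a ≤ k ∧ c ≤ a ∧ 1 ≤ a ∧
        p = (onesZeros k a, onesZeros k c)}

lemma first_pos (k : ℕ) (hk : 0 < k) (p : (Fin k → ℕ) × (Fin k → ℕ))
    (hp : InA k p) (hne : p ≠ 0) : 1 ≤ p.1 ⟨0, hk⟩ := by
  obtain ⟨h1, h2, h3⟩ := hp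
  by_contra h
  push_neg at h
  have h0 : p.1 ⟨0, hk⟩ = 0 := by omega
  apply hne
  have hall1 : ∀ i, p.1 i = 0 := by
    intro i
    have := h1 ⟨0, hk⟩ i (by simp [Fin.le_def])
    omega
  have hall2 : ∀ i, p.2 i = 0 := by
    intro i
    have := h3 i
    have := hall1 i
    omega
  ext i
  · exact hall1 i
  · exact hall2 i

theorem stmt_3 (k : ℕ) (u : (Fin k → ℕ) × (Fin k → ℕ)) (hu : u ∈ Uset k) :
    ¬ ∃ p q : (Fin k → ℕ) × (Fin k → ℕ),
        InA k p ∧ InA k q ∧ p ≠ 0 ∧ q ≠ 0 ∧ u = p + q := by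
  rintro ⟨p, q, hp, hq, hpne, hqne, rfl⟩
  obtain ⟨a, c, hak, hca, ha1, heq⟩ := hu
  rcases Nat.eq_zero_or_pos k with hk | hk
  · apply hpne
    subst hk
    ext i <;> exact absurd i.2 (by omega)
  · have hp1 := first_pos k hk p hp hpne
    have hq1 := first_pos k hk q hq hqne
    have h := congrFun (congrArg Prod.fst heq) ⟨0, hk⟩
    simp only [Prod.fst_add, Pi.add_apply, onesZeros] at h
    rw [if_pos (by show 0 < a; omega)] at h
    omega
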